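/- For σ ∈ [0, 2π], Ls₃^{(1)}(σ) = -(i/4)πσ² + (i/6)σ³ - iσ Li₂(e^{iσ}) - ζ(3) + Li₃(e^{iσ}). -/

import Mathlib

open Complex Real

open MeasureTheory Filter Set Topology

/-- The polylogarithm `Li_k(z) = Σ_{m≥1} z^m/m^k`. -/
noncomputable def Li (k : ℕ) (z : ℂ) : ℂ := ∑' m : ℕ+, z ^ (m : ℕ) / (m : ℂ) ^ k

section Aux

lemma hasSum_pnat {M : Type*} [AddCommMonoid M] [TopologicalSpace M] {f : ℕ → M} {a : M}
    (h : HasSum f a) (h0 : f 0 = 0) : HasSum (fun m : ℕ+ => f (m : ℕ)) a := by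
  have hinj : Function.Injective (fun m : ℕ+ => (m : ℕ)) := fun a b hab => PNat.coe_injective hab
  refine (Function.Injective.hasSum_iff hinj ?_).mpr h
  intro x hx
  have hx0 : x = 0 := by
    by_contra hne
    exact hx ⟨⟨x, Nat.pos_of_ne_zero hne⟩, rfl⟩
  rw [hx0]; exact h0

lemma summable_pnat_div_pow {k : ℕ} (hk : 1 < k) (c : ℝ) :
    Summable (fun m : ℕ+ => c / ((m : ℕ) : ℝ) ^ k) := by
  have h : Summable (fun n : ℕ => c / (n : ℝ) ^ k) := by
    simpa [div_eq_mul_inv, mul_comm] using ((summable_one_div_nat_pow (p := k)).mpr hk).mul_left c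
  exact (hasSum_pnat h.hasSum (by norm_num [zero_pow (by omega : k ≠ 0)])).summable

lemma summable_trig {k : ℕ} (hk : 1 < k) {g : ℕ+ → ℝ}
    (hg : ∀ m : ℕ+, |g m| ≤ 1 / ((m : ℕ) : ℝ) ^ k) : Summable g :=
  Summable.of_norm_bounded (summable_pnat_div_pow hk 1) hg

lemma bound_div (x : ℝ) (hx : |x| ≤ 1) (m : ℕ+) (k : ℕ) :
    |x / ((m : ℕ) : ℝ) ^ k| ≤ 1 / ((m : ℕ) : ℝ) ^ k := by
  have hm : (0 : ℝ) < ((m : ℕ) : ℝ) := by exact_mod_cast m.pos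
  rw [abs_div, _root_.abs_pow, _root_.abs_of_nonneg hm.le]
  gcongr


/-- `cS k σ = Σ cos(mσ)/m^k`. -/
noncomputable def cS (k : ℕ) (σ : ℝ) : ℝ := ∑' m : ℕ+, Real.cos ((m : ℕ) * σ) / ((m : ℕ) : ℝ) ^ k

/-- `sS k σ = Σ sin(mσ)/m^k`. -/
noncomputable def sS (k : ℕ) (σ : ℝ) : ℝ := ∑' m : ℕ+, Real.sin ((m : ℕ) * σ) / ((m : ℕ) : ℝ) ^ k

lemma hasSum_cS {k : ℕ} (hk : 1 < k) (σ : ℝ) :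
    HasSum (fun m : ℕ+ => Real.cos ((m : ℕ) * σ) / ((m : ℕ) : ℝ) ^ k) (cS k σ) :=
  (summable_trig hk (fun m => bound_div _ (Real.abs_cos_le_one _) m k)).hasSum

lemma hasSum_sS {k : ℕ} (hk : 1 < k) (σ : ℝ) :
    HasSum (fun m : ℕ+ => Real.sin ((m : ℕ) * σ) / ((m : ℕ) : ℝ) ^ k) (sS k σ) :=
  (summable_trig hk (fun m => bound_div _ (Real.abs_sin_le_one _) m k)).hasSum

lemma Li_exp (k : ℕ) (hk : 1 < k) (σ : ℝ) :
    Li k (Complex.exp (σ * Complex.I)) = ((cS k σ : ℝ) : ℂ) + ((sS k σ : ℝ) : ℂ) * Complex.I := by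
  have hc := Complex.hasSum_ofReal.mpr (hasSum_cS hk σ)
  have hs := (Complex.hasSum_ofReal.mpr (hasSum_sS hk σ)).mul_right Complex.I
  have hfun : (fun m : ℕ+ => (Complex.exp (σ * Complex.I)) ^ (m : ℕ) / (m : ℂ) ^ k)
      = fun m : ℕ+ => ((Real.cos ((m : ℕ) * σ) / ((m : ℕ) : ℝ) ^ k : ℝ) : ℂ)
          + ((Real.sin ((m : ℕ) * σ) / ((m : ℕ) : ℝ) ^ k : ℝ) : ℂ) * Complex.I := by
    funext m
    rw [← Complex.exp_nat_mul,
      show ((m : ℕ) : ℂ) * (↑σ * Complex.I) = ↑(((m : ℕ) : ℝ) * σ) * Complex.I by push_cast; ring,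
      Complex.exp_mul_I, ← Complex.ofReal_cos, ← Complex.ofReal_sin]
    push_cast
    ring
  rw [Li, hfun]
  exact (hc.add hs).tsum_eq

lemma Li_one : Li 3 1 = ((cS 3 0 : ℝ) : ℂ) := by
  rw [Li]
  refine HasSum.tsum_eq ?_
  have hc := Complex.hasSum_ofReal.mpr (hasSum_cS (by norm_num : 1 < 3) 0)
  have hfun : (fun m : ℕ+ => (1 : ℂ) ^ (m : ℕ) / (m : ℂ) ^ 3)
      = fun m : ℕ+ => ((Real.cos ((m : ℕ) * 0) / ((m : ℕ) : ℝ) ^ 3 : ℝ) : ℂ) := by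
    funext m; push_cast; norm_num
  rw [hfun]; exact hc

lemma cS2_eq {σ : ℝ} (h0 : 0 ≤ σ) (h2 : σ ≤ 2 * π) :
    cS 2 σ = π ^ 2 / 6 - π * σ / 2 + σ ^ 2 / 4 := by
  have hπ := Real.pi_pos
  have hx : σ / (2 * π) ∈ Icc (0 : ℝ) 1 :=
    ⟨by positivity, by rw [div_le_one (by positivity)]; exact h2⟩
  have h := hasSum_one_div_nat_pow_mul_cos (k := 1) one_ne_zero hx
  have harg : ∀ n : ℕ, 2 * π * (n : ℝ) * (σ / (2 * π)) = (n : ℝ) * σ := by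
    intro n; field_simp
  simp only [harg] at h
  have heval : (Polynomial.map (algebraMap ℚ ℝ) (Polynomial.bernoulli (2 * 1))).eval (σ / (2 * π))
      = (σ / (2 * π)) ^ 2 - σ / (2 * π) + 1 / 6 := by
    norm_num [Polynomial.bernoulli, Finset.sum_range_succ,
      bernoulli_eq_bernoulli'_of_ne_one, bernoulli'_two]
    ring
  rw [heval] at h
  have hval : (-1 : ℝ) ^ (1 + 1) * (2 * π) ^ (2 * 1) / 2 / (2 * 1).factorial *
      ((σ / (2 * π)) ^ 2 - σ / (2 * π) + 1 / 6) = π ^ 2 / 6 - π * σ / 2 + σ ^ 2 / 4 := by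
    have h2f : ((2 * 1).factorial : ℝ) = 2 := by norm_num [Nat.factorial]
    rw [h2f]
    field_simp
    ring
  rw [hval] at h
  have hp := hasSum_pnat h (by norm_num)
  rw [cS]
  rw [show (fun m : ℕ+ => Real.cos ((m : ℕ) * σ) / ((m : ℕ) : ℝ) ^ 2)
      = fun m : ℕ+ => 1 / ((m : ℕ) : ℝ) ^ (2 * 1) * Real.cos (((m : ℕ) : ℝ) * σ) by
    funext m; norm_num; ring]
  exact hp.tsum_eq

lemma sS3_eq {σ : ℝ} (h0 : 0 ≤ σ) (h2 : σ ≤ 2 * π) :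
    sS 3 σ = π ^ 2 * σ / 6 - π * σ ^ 2 / 4 + σ ^ 3 / 12 := by
  have hπ := Real.pi_pos
  have hx : σ / (2 * π) ∈ Icc (0 : ℝ) 1 :=
    ⟨by positivity, by rw [div_le_one (by positivity)]; exact h2⟩
  have h := hasSum_one_div_nat_pow_mul_sin (k := 1) one_ne_zero hx
  have harg : ∀ n : ℕ, 2 * π * (n : ℝ) * (σ / (2 * π)) = (n : ℝ) * σ := by
    intro n; field_simp
  simp only [harg] at h
  have heval : (Polynomial.map (algebraMap ℚ ℝ)
      (Polynomial.bernoulli (2 * 1 + 1))).eval (σ / (2 * π))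
      = (σ / (2 * π)) ^ 3 - 3 / 2 * (σ / (2 * π)) ^ 2 + 1 / 2 * (σ / (2 * π)) := by
    norm_num [Polynomial.bernoulli, Finset.sum_range_succ,
      bernoulli_eq_bernoulli'_of_ne_one, bernoulli'_two, bernoulli'_three]
    ring
  rw [heval] at h
  have hval : (-1 : ℝ) ^ (1 + 1) * (2 * π) ^ (2 * 1 + 1) / 2 / (2 * 1 + 1).factorial *
      ((σ / (2 * π)) ^ 3 - 3 / 2 * (σ / (2 * π)) ^ 2 + 1 / 2 * (σ / (2 * π)))
      = π ^ 2 * σ / 6 - π * σ ^ 2 / 4 + σ ^ 3 / 12 := by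
    have h2f : ((2 * 1 + 1).factorial : ℝ) = 6 := by norm_num [Nat.factorial]
    rw [h2f]
    field_simp
    ring
  rw [hval] at h
  have hp := hasSum_pnat h (by norm_num)
  rw [sS]
  rw [show (fun m : ℕ+ => Real.sin ((m : ℕ) * σ) / ((m : ℕ) : ℝ) ^ 3)
      = fun m : ℕ+ => 1 / ((m : ℕ) : ℝ) ^ (2 * 1 + 1) * Real.sin (((m : ℕ) : ℝ) * σ) by
    funext m; norm_num; ring]
  exact hp.tsum_eq

lemma abs_one_sub_exp (θ : ℝ) :
    ‖1 - Complex.exp (θ * Complex.I)‖ = |2 * Real.sin (θ / 2)| := by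
  rw [← Real.sqrt_sq_eq_abs, Complex.norm_def, Complex.normSq_apply]
  congr 1
  rw [show (θ : ℂ) * Complex.I = Complex.I * θ by ring]
  simp only [Complex.sub_re, Complex.sub_im, Complex.one_re, Complex.one_im,
    Complex.exp_re, Complex.exp_im, Complex.I_mul_re, Complex.I_mul_im,
    Complex.ofReal_re, Complex.ofReal_im, Real.exp_zero, neg_zero]
  have h := Real.sin_sq_eq_half_sub (θ / 2)
  have c := Real.sin_sq_add_cos_sq θ
  ring_nf at *
  nlinarith [h, c]

lemma hasSum_log {r : ℝ} (h0r : 0 ≤ r) (hr : r < 1) (θ : ℝ) :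
    HasSum (fun m : ℕ+ => r ^ (m : ℕ) * Real.cos ((m : ℕ) * θ) / ((m : ℕ) : ℝ))
      (-Real.log (‖1 - r * Complex.exp (θ * Complex.I)‖)) := by
  set z : ℂ := (r : ℂ) * Complex.exp (θ * Complex.I) with hz
  have hnorm : ‖z‖ < 1 := by
    rw [hz]
    rw [norm_mul, Complex.norm_real, Real.norm_eq_abs, _root_.abs_of_nonneg h0r]
    have : ‖Complex.exp (θ * Complex.I)‖ = 1 := by
      rw [Complex.norm_exp_ofReal_mul_I]
    rw [this, mul_one]; exact hr
  have hN0 := Complex.hasSum_re (hasSum_taylorSeries_neg_log hnorm)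
  have hre : (-Complex.log (1 - z)).re = -Real.log (‖1 - z‖) := by
    rw [Complex.neg_re, Complex.log_re]
  rw [hre] at hN0
  have key : ∀ n : ℕ, (z ^ n / (n : ℂ)).re = r ^ n * Real.cos ((n : ℝ) * θ) / (n : ℝ) := by
    intro n
    have hzn : z ^ n = ((r ^ n : ℝ) : ℂ) * Complex.exp (((n : ℝ) * θ : ℝ) * Complex.I) := by
      rw [hz, mul_pow, ← Complex.ofReal_pow, ← Complex.exp_nat_mul]
      congr 2
      push_cast
      ring
    rw [hzn, show ((n : ℕ) : ℂ) = (((n : ℝ)) : ℂ) by push_cast; ring, mul_div_right_comm,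
      ← Complex.ofReal_div, Complex.re_ofReal_mul, Complex.exp_ofReal_mul_I_re]
    ring
  simp only [key] at hN0
  have := hasSum_pnat hN0 (by norm_num)
  exact this

lemma tcos (m : ℕ+) (σ : ℝ) :
    ∫ t in (0:ℝ)..σ, t * Real.cos ((m : ℕ) * t) =
      σ * Real.sin ((m : ℕ) * σ) / ((m : ℕ) : ℝ) + Real.cos ((m : ℕ) * σ) / ((m : ℕ) : ℝ) ^ 2
        - 1 / ((m : ℕ) : ℝ) ^ 2 := by
  have hm : (0 : ℝ) < ((m : ℕ) : ℝ) := by exact_mod_cast m.pos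
  have hF : ∀ t ∈ uIcc (0:ℝ) σ, HasDerivAt
      (fun t => t * Real.sin (((m : ℕ) : ℝ) * t) / ((m : ℕ) : ℝ)
        + Real.cos (((m : ℕ) : ℝ) * t) / ((m : ℕ) : ℝ) ^ 2)
      (t * Real.cos (((m : ℕ) : ℝ) * t)) t := by
    intro t _
    have hmt : HasDerivAt (fun t : ℝ => ((m : ℕ) : ℝ) * t) (((m : ℕ) : ℝ)) t := by
      simpa using (hasDerivAt_id t).const_mul (((m : ℕ) : ℝ))
    have hsin : HasDerivAt (fun t : ℝ => Real.sin (((m : ℕ) : ℝ) * t))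
        (Real.cos (((m : ℕ) : ℝ) * t) * ((m : ℕ) : ℝ)) t :=
      (Real.hasDerivAt_sin (((m : ℕ) : ℝ) * t)).comp t hmt
    have hcos : HasDerivAt (fun t : ℝ => Real.cos (((m : ℕ) : ℝ) * t))
        (-Real.sin (((m : ℕ) : ℝ) * t) * ((m : ℕ) : ℝ)) t :=
      (Real.hasDerivAt_cos (((m : ℕ) : ℝ) * t)).comp t hmt
    have h1 := (((hasDerivAt_id t).mul hsin).div_const (((m : ℕ) : ℝ))).add
      (hcos.div_const (((m : ℕ) : ℝ) ^ 2))
    refine h1.congr_deriv ?_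
    simp only [id]
    field_simp
    ring
  have hcont : Continuous fun t : ℝ => t * Real.cos (((m : ℕ) : ℝ) * t) :=
    continuous_id.mul (Real.continuous_cos.comp (continuous_const.mul continuous_id))
  rw [intervalIntegral.integral_eq_sub_of_hasDerivAt hF (hcont.intervalIntegrable _ _)]
  norm_num

lemma sin_half_lb {t : ℝ} (h0 : 0 < t) (h2 : t < 2 * π) :
    t * (2 * π - t) / (2 * π ^ 2) ≤ Real.sin (t / 2) := by
  have hπ := Real.pi_pos
  rcases le_or_gt t π with h | h
  · have hs := Real.mul_le_sin (x := t / 2) (by linarith) (by linarith)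
    have hineq : t * (2 * π - t) / (2 * π ^ 2) ≤ 2 / π * (t / 2) := by
      rw [div_le_iff₀ (by positivity)]
      have : 2 / π * (t / 2) * (2 * π ^ 2) = t * (2 * π) := by field_simp
      rw [this]
      nlinarith
    linarith
  · have h1 : Real.sin (π - t / 2) = Real.sin (t / 2) := Real.sin_pi_sub _
    have hs := Real.mul_le_sin (x := π - t / 2) (by linarith) (by linarith)
    have hineq : t * (2 * π - t) / (2 * π ^ 2) ≤ 2 / π * (π - t / 2) := by
      rw [div_le_iff₀ (by positivity)]
      have : 2 / π * (π - t / 2) * (2 * π ^ 2) = (2 * π - t) * (2 * π) := by field_simp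
      rw [this]
      nlinarith
    linarith

lemma II_log {c : ℝ} (hc : 0 < c) : IntervalIntegrable Real.log volume 0 c := by
  apply IntervalIntegrable.mono_fun'
    (g := fun x => 2 * x ^ (-(1/2) : ℝ) + |Real.log c|)
  · exact ((intervalIntegral.intervalIntegrable_rpow' (by norm_num)).const_mul 2).add intervalIntegrable_const
  · exact Real.measurable_log.aestronglyMeasurable
  · rw [Filter.EventuallyLE, ae_restrict_iff' measurableSet_uIoc]
    refine Eventually.of_forall (fun x hx => ?_)
    rw [uIoc_of_le hc.le] at hx
    obtain ⟨hx0, hxc⟩ := hx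
    rw [Real.norm_eq_abs]
    have hrp : (0:ℝ) < x ^ (-(1/2) : ℝ) := Real.rpow_pos_of_pos hx0 _
    rcases le_or_gt x 1 with h1 | h1
    · have hlog : Real.log x ≤ 0 := Real.log_nonpos hx0.le h1
      have key : -Real.log x ≤ 2 * x ^ (-(1/2) : ℝ) := by
        have ha : Real.log (x ^ (-(1/2) : ℝ)) = -(1/2) * Real.log x := Real.log_rpow hx0 _
        have hb : Real.log (x ^ (-(1/2) : ℝ)) ≤ x ^ (-(1/2) : ℝ) - 1 :=
          Real.log_le_sub_one_of_pos hrp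
        nlinarith
      rw [_root_.abs_of_nonpos hlog]
      have := abs_nonneg (Real.log c)
      linarith
    · rw [_root_.abs_of_nonneg (Real.log_nonneg h1.le)]
      have hxc' : Real.log x ≤ Real.log c := Real.log_le_log hx0 hxc
      have := le_abs_self (Real.log c)
      linarith

lemma II_log_sub {c : ℝ} (hc : 0 < c) :
    IntervalIntegrable (fun t => Real.log (c - t)) volume 0 c := by
  have h := (II_log hc).comp_sub_left c
  simpa using h.symm

lemma II_log_sin : IntervalIntegrable (fun t => Real.log (Real.sin (t / 2))) volume 0 (2 * π) := by
  have hπ := Real.pi_pos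
  apply IntervalIntegrable.mono_fun'
    (g := fun t => Real.log (2 * π ^ 2) + (|Real.log t| + |Real.log (2 * π - t)|))
  · exact intervalIntegrable_const.add
      ((II_log (by positivity)).abs.add (II_log_sub (by positivity)).abs)
  · exact (Real.measurable_log.comp
      (Real.measurable_sin.comp (measurable_id.div_const 2))).aestronglyMeasurable
  · rw [Filter.EventuallyLE, ae_restrict_iff' measurableSet_uIoc]
    refine Eventually.of_forall (fun t ht => ?_)
    rw [uIoc_of_le (by positivity)] at ht
    obtain ⟨h0t, ht2⟩ := ht
    have hl2 : (0:ℝ) ≤ Real.log (2 * π ^ 2) := Real.log_nonneg (by nlinarith [Real.pi_gt_three])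
    rcases eq_or_lt_of_le ht2 with heq | hlt
    · subst heq
      have hsp : Real.sin (2 * π / 2) = 0 := by
        rw [show 2 * π / 2 = π by ring, Real.sin_pi]
      rw [hsp, Real.log_zero, norm_zero]
      have ha1 := abs_nonneg (Real.log (2 * π))
      have ha2 := abs_nonneg (Real.log (2 * π - 2 * π))
      linarith
    · have hs : 0 < Real.sin (t / 2) :=
        Real.sin_pos_of_pos_of_lt_pi (by linarith) (by linarith)
      have hlb := sin_half_lb h0t hlt
      have hsub : (0:ℝ) < 2 * π - t := by linarith
      have hnum : (0:ℝ) < t * (2 * π - t) := mul_pos h0t hsub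
      have hA : (0:ℝ) < t * (2 * π - t) / (2 * π ^ 2) := div_pos hnum (by positivity)
      have hlogs : Real.log (Real.sin (t / 2)) ≤ 0 :=
        Real.log_nonpos hs.le (Real.sin_le_one _)
      rw [Real.norm_eq_abs, _root_.abs_of_nonpos hlogs]
      have h1 : Real.log (t * (2 * π - t) / (2 * π ^ 2)) ≤ Real.log (Real.sin (t / 2)) :=
        Real.log_le_log hA hlb
      have h2 : Real.log (t * (2 * π - t) / (2 * π ^ 2))
          = Real.log t + Real.log (2 * π - t) - Real.log (2 * π ^ 2) := by
        rw [Real.log_div hnum.ne' (by positivity), Real.log_mul h0t.ne' hsub.ne']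
      have h3 := neg_abs_le (Real.log t)
      have h4 := neg_abs_le (Real.log (2 * π - t))
      linarith

lemma sum_int_r {σ r : ℝ} (hσ0 : 0 ≤ σ) (hσ2 : σ ≤ 2 * π) (h0r : 0 ≤ r) (hr : r < 1) :
    HasSum (fun m : ℕ+ => r ^ (m : ℕ) / ((m : ℕ) : ℝ) *
        (σ * Real.sin ((m : ℕ) * σ) / ((m : ℕ) : ℝ) + Real.cos ((m : ℕ) * σ) / ((m : ℕ) : ℝ) ^ 2
          - 1 / ((m : ℕ) : ℝ) ^ 2))
      (-∫ t in (0:ℝ)..σ, t * Real.log (‖1 - r * Complex.exp (t * Complex.I)‖)) := by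
  have hπ := Real.pi_pos
  have hmeas : ∀ m : ℕ+, AEStronglyMeasurable
      (fun t : ℝ => t * (r ^ (m : ℕ) * Real.cos ((m : ℕ) * t) / ((m : ℕ) : ℝ)))
      (volume.restrict (Set.uIoc (0:ℝ) σ)) := fun m =>
    (continuous_id.mul ((continuous_const.mul
      (Real.continuous_cos.comp (continuous_const.mul continuous_id))).div_const _)).aestronglyMeasurable
  have hbound : ∀ m : ℕ+, ∀ᵐ t : ℝ, t ∈ Set.uIoc (0:ℝ) σ →
      ‖t * (r ^ (m : ℕ) * Real.cos ((m : ℕ) * t) / ((m : ℕ) : ℝ))‖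
        ≤ 2 * π * (r ^ (m : ℕ) / ((m : ℕ) : ℝ)) := by
    intro m
    refine Eventually.of_forall (fun t ht => ?_)
    rw [uIoc_of_le hσ0] at ht
    have hm0 : (0:ℝ) < ((m : ℕ) : ℝ) := by exact_mod_cast m.pos
    rw [Real.norm_eq_abs, abs_mul]
    have h1 : |t| ≤ 2 * π := by rw [_root_.abs_of_pos ht.1]; linarith [ht.2]
    have h2 : |r ^ (m : ℕ) * Real.cos ((m : ℕ) * t) / ((m : ℕ) : ℝ)|
        ≤ r ^ (m : ℕ) / ((m : ℕ) : ℝ) := by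
      rw [abs_div, abs_mul, _root_.abs_pow, _root_.abs_of_nonneg h0r,
        _root_.abs_of_nonneg hm0.le]
      gcongr
      nlinarith [Real.abs_cos_le_one ((m : ℕ) * t), pow_nonneg h0r (m : ℕ),
        abs_nonneg (Real.cos ((m : ℕ) * t))]
    calc |t| * |r ^ (m : ℕ) * Real.cos ((m : ℕ) * t) / ((m : ℕ) : ℝ)|
        ≤ (2 * π) * (r ^ (m : ℕ) / ((m : ℕ) : ℝ)) :=
          mul_le_mul h1 h2 (abs_nonneg _) (by positivity)
      _ = 2 * π * (r ^ (m : ℕ) / ((m : ℕ) : ℝ)) := by ring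
  have hgeom : Summable (fun m : ℕ+ => r ^ (m : ℕ)) :=
    (summable_geometric_of_lt_one h0r hr).comp_injective (fun a b hab => PNat.coe_injective hab)
  have hsumm0 : Summable (fun m : ℕ+ => 2 * π * (r ^ (m : ℕ) / ((m : ℕ) : ℝ))) := by
    refine (Summable.of_norm_bounded hgeom (fun m => ?_)).mul_left (2 * π)
    have hm1 : (1:ℝ) ≤ ((m : ℕ) : ℝ) := by exact_mod_cast m.one_le
    rw [Real.norm_eq_abs, abs_div, _root_.abs_pow, _root_.abs_of_nonneg h0r,
      _root_.abs_of_nonneg (by linarith : (0:ℝ) ≤ ((m : ℕ) : ℝ))]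
    exact div_le_self (pow_nonneg h0r _) hm1
  have hsumm : ∀ᵐ t : ℝ, t ∈ Set.uIoc (0:ℝ) σ →
      Summable (fun m : ℕ+ => 2 * π * (r ^ (m : ℕ) / ((m : ℕ) : ℝ))) :=
    Eventually.of_forall (fun _ _ => hsumm0)
  have hbint : IntervalIntegrable
      (fun _ : ℝ => ∑' m : ℕ+, 2 * π * (r ^ (m : ℕ) / ((m : ℕ) : ℝ))) volume 0 σ :=
    intervalIntegrable_const
  have hlim : ∀ᵐ t : ℝ, t ∈ Set.uIoc (0:ℝ) σ →
      HasSum (fun m : ℕ+ => t * (r ^ (m : ℕ) * Real.cos ((m : ℕ) * t) / ((m : ℕ) : ℝ)))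
        (t * (-Real.log (‖1 - r * Complex.exp (t * Complex.I)‖))) :=
    Eventually.of_forall (fun t _ => (hasSum_log h0r hr t).mul_left t)
  have H := intervalIntegral.hasSum_integral_of_dominated_convergence
    (bound := fun (m : ℕ+) (_ : ℝ) => 2 * π * (r ^ (m : ℕ) / ((m : ℕ) : ℝ)))
    hmeas hbound hsumm hbint hlim
  have heq : ∀ m : ℕ+,
      (∫ t in (0:ℝ)..σ, t * (r ^ (m : ℕ) * Real.cos ((m : ℕ) * t) / ((m : ℕ) : ℝ)))
      = r ^ (m : ℕ) / ((m : ℕ) : ℝ) *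
        (σ * Real.sin ((m : ℕ) * σ) / ((m : ℕ) : ℝ) + Real.cos ((m : ℕ) * σ) / ((m : ℕ) : ℝ) ^ 2
          - 1 / ((m : ℕ) : ℝ) ^ 2) := by
    intro m
    have hf : (fun t : ℝ => t * (r ^ (m : ℕ) * Real.cos ((m : ℕ) * t) / ((m : ℕ) : ℝ)))
        = fun t : ℝ => (r ^ (m : ℕ) / ((m : ℕ) : ℝ)) * (t * Real.cos ((m : ℕ) * t)) := by
      funext t; ring
    rw [hf, intervalIntegral.integral_const_mul, tcos]
  have hint : (∫ t in (0:ℝ)..σ,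
        t * (-Real.log (‖1 - r * Complex.exp (t * Complex.I)‖)))
      = -∫ t in (0:ℝ)..σ, t * Real.log (‖1 - r * Complex.exp (t * Complex.I)‖) := by
    rw [← intervalIntegral.integral_neg]
    congr 1; funext t; ring
  simp only [heq, hint] at H
  exact H

lemma tendsto_sum_side (σ : ℝ) :
    Tendsto (fun x : ℝ => ∑' m : ℕ+, x ^ (m : ℕ) / ((m : ℕ) : ℝ) *
        (σ * Real.sin ((m : ℕ) * σ) / ((m : ℕ) : ℝ) + Real.cos ((m : ℕ) * σ) / ((m : ℕ) : ℝ) ^ 2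
          - 1 / ((m : ℕ) : ℝ) ^ 2))
      (𝓝[Ico (0:ℝ) 1] 1) (𝓝 (σ * sS 2 σ + cS 3 σ - cS 3 0)) := by
  set g : ℝ → ℝ := fun x : ℝ => ∑' m : ℕ+, x ^ (m : ℕ) / ((m : ℕ) : ℝ) *
      (σ * Real.sin ((m : ℕ) * σ) / ((m : ℕ) : ℝ) + Real.cos ((m : ℕ) * σ) / ((m : ℕ) : ℝ) ^ 2
        - 1 / ((m : ℕ) : ℝ) ^ 2) with hg
  have hcont : ContinuousOn g (Icc (0:ℝ) 1) := by
    apply continuousOn_tsum (u := fun m : ℕ+ => (|σ| + 2) / ((m : ℕ) : ℝ) ^ 2)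
    · intro m
      exact Continuous.continuousOn (by fun_prop)
    · exact summable_pnat_div_pow (by norm_num) _
    · intro m x hx
      have hm1 : (1:ℝ) ≤ ((m : ℕ) : ℝ) := by exact_mod_cast m.one_le
      have hm0 : (0:ℝ) < ((m : ℕ) : ℝ) := by linarith
      have e1 : |σ * Real.sin ((m : ℕ) * σ) / ((m : ℕ) : ℝ)| ≤ |σ| / ((m : ℕ) : ℝ) := by
        rw [abs_div, abs_mul, _root_.abs_of_nonneg hm0.le]
        gcongr
        calc |σ| * |Real.sin ((m : ℕ) * σ)| ≤ |σ| * 1 := by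
              gcongr; exact Real.abs_sin_le_one _
          _ = |σ| := mul_one _
      have e2 : |Real.cos ((m : ℕ) * σ) / ((m : ℕ) : ℝ) ^ 2| ≤ 1 / ((m : ℕ) : ℝ) := by
        refine le_trans (bound_div _ (Real.abs_cos_le_one _) m 2) ?_
        gcongr
        nlinarith [mul_self_nonneg (((m : ℕ) : ℝ) - 1)]
      have e3 : |1 / ((m : ℕ) : ℝ) ^ 2| ≤ 1 / ((m : ℕ) : ℝ) := by
        refine le_trans (bound_div 1 (by norm_num) m 2) ?_
        gcongr
        nlinarith [mul_self_nonneg (((m : ℕ) : ℝ) - 1)]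
      have hE : |σ * Real.sin ((m : ℕ) * σ) / ((m : ℕ) : ℝ)
            + Real.cos ((m : ℕ) * σ) / ((m : ℕ) : ℝ) ^ 2 - 1 / ((m : ℕ) : ℝ) ^ 2|
          ≤ (|σ| + 2) / ((m : ℕ) : ℝ) := by
        have htri := abs_sub (σ * Real.sin ((m : ℕ) * σ) / ((m : ℕ) : ℝ)
          + Real.cos ((m : ℕ) * σ) / ((m : ℕ) : ℝ) ^ 2) (1 / ((m : ℕ) : ℝ) ^ 2)
        have htri2 := abs_add_le (σ * Real.sin ((m : ℕ) * σ) / ((m : ℕ) : ℝ))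
          (Real.cos ((m : ℕ) * σ) / ((m : ℕ) : ℝ) ^ 2)
        have hsplit : (|σ| + 2) / ((m : ℕ) : ℝ)
            = |σ| / ((m : ℕ) : ℝ) + 1 / ((m : ℕ) : ℝ) + 1 / ((m : ℕ) : ℝ) := by
          rw [← add_div, ← add_div]
          ring_nf
        rw [hsplit]
        linarith
      have hxm : |x ^ (m : ℕ) / ((m : ℕ) : ℝ)| ≤ 1 / ((m : ℕ) : ℝ) := by
        rw [abs_div, _root_.abs_pow, _root_.abs_of_nonneg hm0.le]
        gcongr
        exact pow_le_one₀ (abs_nonneg x) (abs_le.mpr ⟨by linarith [hx.1], hx.2⟩)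
      rw [Real.norm_eq_abs, abs_mul]
      calc |x ^ (m : ℕ) / ((m : ℕ) : ℝ)| *
            |σ * Real.sin ((m : ℕ) * σ) / ((m : ℕ) : ℝ)
              + Real.cos ((m : ℕ) * σ) / ((m : ℕ) : ℝ) ^ 2 - 1 / ((m : ℕ) : ℝ) ^ 2|
          ≤ (1 / ((m : ℕ) : ℝ)) * ((|σ| + 2) / ((m : ℕ) : ℝ)) :=
            mul_le_mul hxm hE (abs_nonneg _) (by positivity)
        _ = (|σ| + 2) / ((m : ℕ) : ℝ) ^ 2 := by
            rw [div_mul_div_comm, one_mul, ← sq]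
  have h1 : Tendsto g (𝓝[Icc (0:ℝ) 1] 1) (𝓝 (g 1)) :=
    hcont.continuousWithinAt (by norm_num : (1:ℝ) ∈ Icc (0:ℝ) 1)
  have h2 : Tendsto g (𝓝[Ico (0:ℝ) 1] 1) (𝓝 (g 1)) :=
    h1.mono_left (nhdsWithin_mono _ Ico_subset_Icc_self)
  have hg1 : g 1 = σ * sS 2 σ + cS 3 σ - cS 3 0 := by
    have hs2 := (hasSum_sS (by norm_num : 1 < 2) σ).mul_left σ
    have hc3 := hasSum_cS (by norm_num : 1 < 3) σ
    have hz3 : HasSum (fun m : ℕ+ => 1 / ((m : ℕ) : ℝ) ^ 3) (cS 3 0) := by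
      have h := hasSum_cS (by norm_num : 1 < 3) 0
      have : (fun m : ℕ+ => Real.cos ((m : ℕ) * 0) / ((m : ℕ) : ℝ) ^ 3)
          = fun m : ℕ+ => 1 / ((m : ℕ) : ℝ) ^ 3 := by
        funext m; rw [mul_zero, Real.cos_zero]
      rwa [this] at h
    have htot := (hs2.add hc3).sub hz3
    have hfun : (fun m : ℕ+ => (1:ℝ) ^ (m : ℕ) / ((m : ℕ) : ℝ) *
        (σ * Real.sin ((m : ℕ) * σ) / ((m : ℕ) : ℝ) + Real.cos ((m : ℕ) * σ) / ((m : ℕ) : ℝ) ^ 2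
          - 1 / ((m : ℕ) : ℝ) ^ 2))
        = fun m : ℕ+ => σ * (Real.sin ((m : ℕ) * σ) / ((m : ℕ) : ℝ) ^ 2)
            + Real.cos ((m : ℕ) * σ) / ((m : ℕ) : ℝ) ^ 3 - 1 / ((m : ℕ) : ℝ) ^ 3 := by
      funext m
      have hm0 : ((m : ℕ) : ℝ) ≠ 0 := by
        have : (0:ℝ) < ((m : ℕ) : ℝ) := by exact_mod_cast m.pos
        exact this.ne'
      field_simp
      ring
    rw [hg]
    simp only
    rw [hfun]
    exact htot.tsum_eq
  rwa [hg1] at h2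

lemma normSq_one_sub_mul_exp (r t : ℝ) :
    Complex.normSq (1 - r * Complex.exp (t * Complex.I)) = 1 - 2 * r * Real.cos t + r ^ 2 := by
  rw [show (t : ℂ) * Complex.I = Complex.I * t by ring]
  simp only [Complex.normSq_apply, Complex.sub_re, Complex.sub_im, Complex.one_re, Complex.one_im,
    Complex.mul_re, Complex.mul_im, Complex.ofReal_re, Complex.ofReal_im,
    Complex.exp_re, Complex.exp_im, Complex.I_mul_re, Complex.I_mul_im,
    Complex.I_re, Complex.I_im, Real.exp_zero, neg_zero,
    mul_zero, zero_mul, sub_zero, zero_sub, mul_one, one_mul, add_zero, zero_add]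
  ring_nf
  nlinarith [Real.sin_sq_add_cos_sq t, Real.exp_zero]

lemma tendsto_int_side {σ : ℝ} (h0 : 0 ≤ σ) (h2 : σ ≤ 2 * π) :
    Tendsto (fun r : ℝ => ∫ t in (0:ℝ)..σ,
        t * Real.log (‖1 - r * Complex.exp (t * Complex.I)‖))
      (𝓝[Ico (0:ℝ) 1] 1)
      (𝓝 (∫ t in (0:ℝ)..σ, t * Real.log (‖1 - Complex.exp (t * Complex.I)‖))) := by
  have hπ := Real.pi_pos
  have hae : ∀ᵐ t : ℝ, t ≠ 2 * π := by
    have h := measure_eq_zero_iff_ae_notMem.mp (Real.volume_singleton (a := 2 * π))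
    filter_upwards [h] with t ht
    simpa using ht
  apply intervalIntegral.tendsto_integral_filter_of_dominated_convergence
    (bound := fun t => 2 * π * (1 - Real.log (Real.sin (t / 2))))
  · refine Eventually.of_forall (fun r => ?_)
    refine AEStronglyMeasurable.mul aestronglyMeasurable_id ?_
    refine Measurable.aestronglyMeasurable ?_
    refine Real.measurable_log.comp ?_
    exact (continuous_norm.comp (continuous_const.sub
      (continuous_const.mul (Complex.continuous_exp.comp
        (Complex.continuous_ofReal.mul continuous_const))))).measurable
  · have hhalf : ∀ᶠ r : ℝ in 𝓝[Ico (0:ℝ) 1] 1, r ∈ Ico (0:ℝ) 1 ∧ 1/2 < r := by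
      refine eventually_mem_nhdsWithin.and ?_
      exact eventually_nhdsWithin_of_eventually_nhds (eventually_gt_nhds (by norm_num))
    filter_upwards [hhalf] with r hr
    obtain ⟨⟨hr0, hr1⟩, hrhalf⟩ := hr
    filter_upwards [hae] with t htne htmem
    rw [uIoc_of_le h0] at htmem
    obtain ⟨ht0, htσ⟩ := htmem
    have ht2 : t < 2 * π := lt_of_le_of_ne (le_trans htσ h2) htne
    have hs : 0 < Real.sin (t / 2) :=
      Real.sin_pos_of_pos_of_lt_pi (by linarith) (by linarith)
    have hlogs : Real.log (Real.sin (t / 2)) ≤ 0 :=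
      Real.log_nonpos hs.le (Real.sin_le_one _)
    have hup : ‖1 - r * Complex.exp (t * Complex.I)‖ ≤ 2 := by
      rw [sub_eq_add_neg]
      calc ‖1 + -((r:ℂ) * Complex.exp (t * Complex.I))‖
          ≤ ‖(1:ℂ)‖ + ‖(-((r:ℂ) * Complex.exp (t * Complex.I)))‖ :=
            norm_add_le _ _
        _ = 1 + |r| * 1 := by
            rw [norm_one, norm_neg, norm_mul, Complex.norm_real, Real.norm_eq_abs,
              Complex.norm_exp_ofReal_mul_I]
        _ ≤ 2 := by rw [_root_.abs_of_nonneg hr0]; linarith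
    have hsq : 2 * Real.sin (t / 2) ^ 2 ≤ Complex.normSq (1 - r * Complex.exp (t * Complex.I)) := by
      rw [normSq_one_sub_mul_exp]
      have hhalfsq := Real.sin_sq_eq_half_sub (t / 2)
      rw [show 2 * (t / 2) = t by ring] at hhalfsq
      nlinarith [Real.cos_le_one t, Real.neg_one_le_cos t, sq_nonneg (r - Real.cos t),
        sq_nonneg (2 * r - 1)]
    have hlo : Real.sqrt 2 * Real.sin (t / 2) ≤ ‖1 - r * Complex.exp (t * Complex.I)‖ := by
      have hrt : Real.sqrt (2 * Real.sin (t / 2) ^ 2) = Real.sqrt 2 * Real.sin (t / 2) := by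
        rw [Real.sqrt_mul (by norm_num), Real.sqrt_sq hs.le]
      rw [Complex.norm_def, ← hrt]
      exact Real.sqrt_le_sqrt hsq
    have hwpos : 0 < ‖1 - r * Complex.exp (t * Complex.I)‖ := by
      have hsqrt2 : (1:ℝ) ≤ Real.sqrt 2 := by
        rw [show (1:ℝ) = Real.sqrt 1 by rw [Real.sqrt_one]]
        exact Real.sqrt_le_sqrt (by norm_num)
      nlinarith
    have hv_up : Real.log (‖1 - r * Complex.exp (t * Complex.I)‖) ≤ 1 := by
      have h₁ := Real.log_le_log hwpos hup
      have h₂ : Real.log 2 ≤ 1 := by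
        have := Real.log_le_sub_one_of_pos (by norm_num : (0:ℝ) < 2)
        linarith
      linarith
    have hv_lo : Real.log (Real.sin (t / 2))
        ≤ Real.log (‖1 - r * Complex.exp (t * Complex.I)‖) := by
      have hsqrt2 : (1:ℝ) ≤ Real.sqrt 2 := by
        rw [show (1:ℝ) = Real.sqrt 1 by rw [Real.sqrt_one]]
        exact Real.sqrt_le_sqrt (by norm_num)
      have h₁ : Real.log (Real.sqrt 2 * Real.sin (t / 2))
          ≤ Real.log (‖1 - r * Complex.exp (t * Complex.I)‖) :=
        Real.log_le_log (by nlinarith) hlo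
      have h₂ : Real.log (Real.sqrt 2 * Real.sin (t / 2))
          = Real.log (Real.sqrt 2) + Real.log (Real.sin (t / 2)) :=
        Real.log_mul (by nlinarith) hs.ne'
      have h₃ : 0 ≤ Real.log (Real.sqrt 2) := Real.log_nonneg hsqrt2
      linarith
    rw [Real.norm_eq_abs, abs_mul, _root_.abs_of_pos ht0]
    have habs_v : |Real.log (‖1 - r * Complex.exp (t * Complex.I)‖)|
        ≤ 1 - Real.log (Real.sin (t / 2)) := by
      rw [abs_le]
      constructor <;> linarith
    calc t * |Real.log (‖1 - r * Complex.exp (t * Complex.I)‖)|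
        ≤ (2 * π) * (1 - Real.log (Real.sin (t / 2))) :=
          mul_le_mul (by linarith) habs_v (abs_nonneg _) (by positivity)
      _ = 2 * π * (1 - Real.log (Real.sin (t / 2))) := by ring
  · have hII : IntervalIntegrable (fun t => Real.log (Real.sin (t / 2))) volume 0 σ := by
      refine II_log_sin.mono_set ?_
      rw [uIcc_of_le h0, uIcc_of_le (by positivity)]
      exact Icc_subset_Icc le_rfl h2
    exact (intervalIntegrable_const.sub hII).const_mul _
  · filter_upwards [hae] with t htne htmem
    rw [uIoc_of_le h0] at htmem
    obtain ⟨ht0, htσ⟩ := htmem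
    have ht2 : t < 2 * π := lt_of_le_of_ne (le_trans htσ h2) htne
    have hs : 0 < Real.sin (t / 2) :=
      Real.sin_pos_of_pos_of_lt_pi (by linarith) (by linarith)
    have hinner : Continuous (fun r : ℝ => (1 : ℂ) - r * Complex.exp (t * Complex.I)) :=
      continuous_const.sub (Complex.continuous_ofReal.mul continuous_const)
    have hne : ‖(1 : ℂ) - (1:ℝ) * Complex.exp (t * Complex.I)‖ ≠ 0 := by
      rw [Complex.ofReal_one, one_mul, abs_one_sub_exp]
      have : (0:ℝ) < |2 * Real.sin (t / 2)| := by
        rw [_root_.abs_of_pos (by linarith : (0:ℝ) < 2 * Real.sin (t / 2))]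
        linarith
      exact this.ne'
    have hg : Tendsto (fun r : ℝ => ‖1 - r * Complex.exp (t * Complex.I)‖) (𝓝 1)
        (𝓝 (‖1 - ((1:ℝ):ℂ) * Complex.exp (t * Complex.I)‖)) :=
      (continuous_norm.comp hinner).continuousAt
    have hlog := (Real.continuousAt_log hne).tendsto
    have htend : Tendsto
        (fun r : ℝ => t * Real.log (‖1 - r * Complex.exp (t * Complex.I)‖)) (𝓝 1)
        (𝓝 (t * Real.log (‖1 - ((1:ℝ):ℂ) * Complex.exp (t * Complex.I)‖))) :=
      tendsto_const_nhds.mul (hlog.comp hg)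
    have := htend.mono_left (nhdsWithin_le_nhds (s := Ico (0:ℝ) 1))
    simpa using this

lemma main_integral {σ : ℝ} (h0 : 0 ≤ σ) (h2 : σ ≤ 2 * π) :
    (∫ t in (0:ℝ)..σ, t * Real.log (‖1 - Complex.exp (t * Complex.I)‖))
      = -(σ * sS 2 σ + cS 3 σ - cS 3 0) := by
  have hne : (𝓝[Ico (0:ℝ) 1] (1:ℝ)).NeBot := by
    refine mem_closure_iff_nhdsWithin_neBot.mp ?_
    rw [closure_Ico (by norm_num : (0:ℝ) ≠ 1)]
    exact ⟨by norm_num, le_refl 1⟩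
  have hI := tendsto_int_side h0 h2
  have hS : Tendsto (fun r : ℝ => ∫ t in (0:ℝ)..σ,
      t * Real.log (‖1 - r * Complex.exp (t * Complex.I)‖))
      (𝓝[Ico (0:ℝ) 1] 1) (𝓝 (-(σ * sS 2 σ + cS 3 σ - cS 3 0))) := by
    have h1 := (tendsto_sum_side σ).neg
    refine h1.congr' ?_
    filter_upwards [eventually_mem_nhdsWithin] with r hr
    obtain ⟨h0r, hr1⟩ := hr
    have := (sum_int_r h0 h2 h0r hr1).tsum_eq
    rw [this]
    ring
  exact tendsto_nhds_unique hI hS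

end Aux

/-- For `σ ∈ [0,2π]`,
`Ls₃^{(1)}(σ) = -(i/4)πσ² + (i/6)σ³ - iσ Li₂(e^{iσ}) - ζ(3) + Li₃(e^{iσ})`. -/
theorem stmt8 (σ : ℝ) (h0 : 0 ≤ σ) (h2 : σ ≤ 2 * π) :
    ((-(∫ θ in (0:ℝ)..σ, θ * Real.log |2 * Real.sin (θ / 2)|) : ℝ) : ℂ) =
      -(Complex.I / 4) * π * σ ^ 2 + Complex.I / 6 * σ ^ 3 -
        Complex.I * σ * Li 2 (Complex.exp (σ * Complex.I)) - Li 3 1 +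
        Li 3 (Complex.exp (σ * Complex.I)) := by
  have hint : (∫ θ in (0:ℝ)..σ, θ * Real.log |2 * Real.sin (θ / 2)|)
      = -(σ * sS 2 σ + cS 3 σ - cS 3 0) := by
    rw [← main_integral h0 h2]
    apply intervalIntegral.integral_congr
    intro t _
    simp only
    rw [← abs_one_sub_exp t]
  rw [hint, Li_exp 2 (by norm_num) σ, Li_exp 3 (by norm_num) σ, Li_one,
    cS2_eq h0 h2, sS3_eq h0 h2]
  push_cast
  linear_combination ((σ : ℂ) * (sS 2 σ : ℂ)) * Complex.I_sq
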